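/- Let ρ_1,...,ρ_d be density matrices, Ω = (1/d)∑_n ρ_n, and M = {M_r : 1 ≤ r ≤ N} a POVM. For any integer k with 3k ≤ d, there exists a subset S ⊆ {1,...,d} with |S| = k such that the state ω = (1/k)∑_{j∈S} ρ_j satisfies D_M(ω, Ω) ≥ (1/N)·(1/d)∑_{n=1}^d D_M(ρ_n, Ω), where D_M(ρ,σ) = (1/2)∑_r |Tr(M_r(ρ-σ))|. -/

import Mathlib

open ComplexOrder

open Matrix in
/-- Distinguishability of `ρ` and `σ` with respect to the POVM `M`. -/
noncomputable def povmDist {N r : ℕ} (M : Fin r → Matrix (Fin N) (Fin N) ℂ)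
    (ρ σ : Matrix (Fin N) (Fin N) ℂ) : ℝ :=
  (1 / 2) * ∑ i, ‖(M i * (ρ - σ)).trace‖

set_option linter.unusedVariables false

lemma exists_topk {α : Type*} [DecidableEq α] (x : α → ℝ) :
    ∀ (k : ℕ) (s : Finset α), k ≤ s.card →
      ∃ S ⊆ s, S.card = k ∧ ∀ j ∈ S, ∀ i ∈ s, i ∉ S → x i ≤ x j := by
  intro k
  induction k with
  | zero => exact fun s _ => ⟨∅, by simp⟩
  | succ k ih =>
    intro s hs
    have hne : s.Nonempty := Finset.card_pos.mp (lt_of_lt_of_le (Nat.succ_pos k) hs)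
    obtain ⟨m, hm, hmax⟩ := s.exists_max_image x hne
    obtain ⟨S', hS's, hcard, hprop⟩ := ih (s.erase m)
      (by rw [Finset.card_erase_of_mem hm]; omega)
    refine ⟨insert m S', ?_, ?_, ?_⟩
    · exact Finset.insert_subset hm (hS's.trans (Finset.erase_subset _ _))
    · rw [Finset.card_insert_of_notMem (fun h => (Finset.mem_erase.mp (hS's h)).1 rfl), hcard]
    · intro j hj i hi hiS
      rcases Finset.mem_insert.mp hj with rfl | hjS'
      · exact hmax i hi
      · exact hprop j hjS' i (Finset.mem_erase.mpr
          ⟨fun h => hiS (h ▸ Finset.mem_insert_self m S'), hi⟩)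
          (fun h => hiS (Finset.mem_insert_of_mem h))

lemma key_aux (d k : ℕ) (x : Fin d → ℝ) (hsum : ∑ n, x n = 0)
    (hk : 0 < k) (h3 : 3 * k ≤ d)
    (hp2 : 2 * (Finset.univ.filter (fun n => 0 < x n)).card ≤ d) :
    ∃ S : Finset (Fin d), S.card = k ∧ (k : ℝ) * ∑ n, |x n| ≤ d * ∑ j ∈ S, x j := by
  classical
  set P : Finset (Fin d) := Finset.univ.filter (fun n => 0 < x n) with hP
  set p : ℕ := P.card with hpdef
  set a : ℝ := ∑ j ∈ P, x j with ha
  have hanonneg : 0 ≤ a := Finset.sum_nonneg fun i hi => le_of_lt (Finset.mem_filter.mp hi).2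
  -- sum over complement
  have hsplit : a + ∑ j ∈ Finset.univ.filter (fun n => ¬ 0 < x n), x j = 0 := by
    rw [ha, Finset.sum_filter_add_sum_filter_not]; exact hsum
  have hA : ∑ n, |x n| = 2 * a := by
    rw [← Finset.sum_filter_add_sum_filter_not Finset.univ (fun n => 0 < x n) (fun n => |x n|)]
    have h1 : ∑ j ∈ P, |x j| = a :=
      Finset.sum_congr rfl fun i hi => abs_of_pos (Finset.mem_filter.mp hi).2
    have h2 : ∑ j ∈ Finset.univ.filter (fun n => ¬ 0 < x n), |x j|
        = - ∑ j ∈ Finset.univ.filter (fun n => ¬ 0 < x n), x j := by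
      rw [← Finset.sum_neg_distrib]
      exact Finset.sum_congr rfl fun i hi =>
        abs_of_nonpos (le_of_not_gt (Finset.mem_filter.mp hi).2)
    rw [h1, h2]; linarith
  obtain ⟨S, -, hScard, htop⟩ := exists_topk x k Finset.univ (by simp; omega)
  refine ⟨S, hScard, ?_⟩
  rw [hA]
  by_cases hall : ∀ j ∈ S, 0 < x j
  · -- S ⊆ P
    have hSP : S ⊆ P := fun j hj => Finset.mem_filter.mpr ⟨Finset.mem_univ j, hall j hj⟩
    have hkp : k ≤ p := hScard ▸ Finset.card_le_card hSP
    have hSnonneg : 0 ≤ ∑ j ∈ S, x j := Finset.sum_nonneg fun j hj => le_of_lt (hall j hj)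
    have hsplit2 : ∑ j ∈ P \ S, x j + ∑ j ∈ S, x j = a := Finset.sum_sdiff hSP
    have hbound : (k : ℝ) * ∑ j ∈ P \ S, x j ≤ ((p : ℝ) - k) * ∑ j ∈ S, x j := by
      have h1 : ∀ i ∈ P \ S, (k : ℝ) * x i ≤ ∑ j ∈ S, x j := by
        intro i hi
        have hi' := Finset.mem_sdiff.mp hi
        calc (k : ℝ) * x i = ∑ _j ∈ S, x i := by rw [Finset.sum_const, hScard]; ring
        _ ≤ ∑ j ∈ S, x j :=
          Finset.sum_le_sum fun j hj => htop j hj i (Finset.mem_univ i) hi'.2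
      calc (k : ℝ) * ∑ j ∈ P \ S, x j = ∑ i ∈ P \ S, (k : ℝ) * x i := by
            rw [Finset.mul_sum]
        _ ≤ ∑ _i ∈ P \ S, ∑ j ∈ S, x j := Finset.sum_le_sum h1
        _ = ((p : ℝ) - k) * ∑ j ∈ S, x j := by
            rw [Finset.sum_const, Finset.card_sdiff_of_subset hSP, hScard, nsmul_eq_mul,
              Nat.cast_sub hkp]
    have hpd : 2 * (p : ℝ) ≤ d := by exact_mod_cast hp2
    nlinarith [mul_le_mul_of_nonneg_left hSnonneg (le_of_lt (by exact_mod_cast hk : (0:ℝ) < k))]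
  · push_neg at hall
    obtain ⟨j0, hj0S, hj0⟩ := hall
    have hout : ∀ i, i ∉ S → x i ≤ 0 :=
      fun i hi => le_trans (htop j0 hj0S i (Finset.mem_univ i) hi) hj0
    have hPS : P ⊆ S := by
      intro i hi
      by_contra hiS
      exact absurd (Finset.mem_filter.mp hi).2 (not_lt.mpr (hout i hiS))
    have hj0P : j0 ∉ P := fun h => absurd (Finset.mem_filter.mp h).2 (not_lt.mpr hj0)
    have hpk : p + 1 ≤ k := by
      have : P ⊂ S := ⟨hPS, fun h => hj0P (h hj0S)⟩
      have := Finset.card_lt_card this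
      omega
    set T : Finset (Fin d) := S \ P with hT
    set C : Finset (Fin d) := Finset.univ \ S with hC
    have hTcard : T.card = k - p := by rw [hT, Finset.card_sdiff_of_subset hPS, hScard]
    have hCcard : C.card = d - k := by
      rw [hC, Finset.card_sdiff_of_subset (Finset.subset_univ S), hScard, Finset.card_univ, Fintype.card_fin]
    have hTsum : ∑ j ∈ T, x j + a = ∑ j ∈ S, x j := Finset.sum_sdiff hPS
    have hCsum : ∑ j ∈ C, x j + ∑ j ∈ S, x j = 0 := by
      rw [hC]; rw [Finset.sum_sdiff (Finset.subset_univ S)]; exact hsum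
    have hpair : (T.card : ℝ) * ∑ c ∈ C, x c ≤ (C.card : ℝ) * ∑ t ∈ T, x t := by
      calc (T.card : ℝ) * ∑ c ∈ C, x c = ∑ _t ∈ T, ∑ c ∈ C, x c := by
            rw [Finset.sum_const, nsmul_eq_mul]
        _ ≤ ∑ t ∈ T, ∑ _c ∈ C, x t := by
            refine Finset.sum_le_sum fun t ht => Finset.sum_le_sum fun c hc => ?_
            exact htop t (Finset.mem_sdiff.mp ht).1 c (Finset.mem_univ c)
              (Finset.mem_sdiff.mp hc).2
        _ = ∑ t ∈ T, (C.card : ℝ) * x t := by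
            simp [Finset.sum_const, nsmul_eq_mul]
        _ = (C.card : ℝ) * ∑ t ∈ T, x t := by rw [← Finset.mul_sum]
    rw [hTcard, hCcard] at hpair
    have hkd : (3 : ℝ) * k ≤ d := by exact_mod_cast h3
    have hk1 : (1 : ℝ) ≤ k := by exact_mod_cast hk
    have hpk' : (p : ℝ) + 1 ≤ k := by exact_mod_cast hpk
    have hcast1 : ((k - p : ℕ) : ℝ) = (k : ℝ) - p := by
      rw [Nat.cast_sub]; omega
    have hcast2 : ((d - k : ℕ) : ℝ) = (d : ℝ) - k := by
      rw [Nat.cast_sub]; omega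
    rw [hcast1, hcast2] at hpair
    set s : ℝ := ∑ j ∈ S, x j with hs
    clear_value s
    clear_value a
    clear hA hsplit hout hPS hj0P htop hsum
    have hs1 : ((d:ℝ) - k) * a ≤ ((d:ℝ) - p) * s := by nlinarith [hpair, hTsum, hCsum]
    have hcoef : (0:ℝ) ≤ (d:ℝ) * ((d:ℝ) - k) - 2 * k * ((d:ℝ) - p) := by
      have hd0 : (0:ℝ) ≤ (d:ℝ) := by positivity
      nlinarith [mul_le_mul_of_nonneg_right hkd hd0,
        mul_nonneg (by linarith : (0:ℝ) ≤ (k:ℝ)) (by positivity : (0:ℝ) ≤ (p:ℝ))]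
    have hkey : 2 * (k:ℝ) * ((d:ℝ) - p) * a ≤ (d:ℝ) * (((d:ℝ) - k) * a) := by
      nlinarith [mul_nonneg hcoef hanonneg]
    have hdp : (0:ℝ) < (d:ℝ) - p := by linarith
    have hfin : ((d:ℝ) - p) * ((k:ℝ) * (2 * a)) ≤ ((d:ℝ) - p) * ((d:ℝ) * s) :=
      calc ((d:ℝ) - p) * ((k:ℝ) * (2 * a)) = 2 * (k:ℝ) * ((d:ℝ) - p) * a := by ring
        _ ≤ (d:ℝ) * (((d:ℝ) - k) * a) := hkey
        _ ≤ (d:ℝ) * (((d:ℝ) - p) * s) :=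
            mul_le_mul_of_nonneg_left hs1 (by positivity : (0:ℝ) ≤ (d:ℝ))
        _ = ((d:ℝ) - p) * ((d:ℝ) * s) := by ring
    exact le_of_mul_le_mul_left hfin hdp

lemma key_real (d k : ℕ) (x : Fin d → ℝ) (hsum : ∑ n, x n = 0)
    (hk : 0 < k) (h3 : 3 * k ≤ d) :
    ∃ S : Finset (Fin d), S.card = k ∧ (k : ℝ) * ∑ n, |x n| ≤ d * |∑ j ∈ S, x j| := by
  classical
  set A : Finset (Fin d) := Finset.univ.filter (fun n => 0 < x n) with hA
  set B : Finset (Fin d) := Finset.univ.filter (fun n => 0 < -x n) with hB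
  have hdisj : Disjoint A B := by
    rw [Finset.disjoint_left]
    intro i hiA hiB
    have h1 := (Finset.mem_filter.mp hiA).2
    have h2 := (Finset.mem_filter.mp hiB).2
    linarith
  have hpq : A.card + B.card ≤ d := by
    rw [← Finset.card_union_of_disjoint hdisj]
    simpa using Finset.card_le_univ (A ∪ B)
  have hd0 : (0:ℝ) ≤ (d:ℝ) := by positivity
  by_cases h : 2 * A.card ≤ d
  · obtain ⟨S, hcard, hle⟩ := key_aux d k x hsum hk h3 h
    exact ⟨S, hcard, hle.trans (mul_le_mul_of_nonneg_left (le_abs_self _) hd0)⟩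
  · have hq : 2 * B.card ≤ d := by omega
    have hsum' : ∑ n, -x n = 0 := by rw [Finset.sum_neg_distrib, hsum, neg_zero]
    obtain ⟨S, hcard, hle⟩ := key_aux d k (fun n => -x n) hsum' hk h3 hq
    refine ⟨S, hcard, ?_⟩
    have habs : ∑ n, |-x n| = ∑ n, |x n| := by simp
    rw [habs] at hle
    have : ∑ j ∈ S, -x j = -∑ j ∈ S, x j := by rw [Finset.sum_neg_distrib]
    rw [this] at hle
    exact hle.trans (mul_le_mul_of_nonneg_left (neg_le_abs _) hd0)

lemma abs_of_im_zero (w : ℂ) (h : w.im = 0) : ‖w‖ = |w.re| := by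
  rw [Complex.norm_def, Complex.normSq_apply, h]
  simpa using Real.sqrt_mul_self_eq_abs w.re

open Matrix in
/-- Core of Theorem 2(i): there is a uniform mixture of `k` eigenstates whose
distinguishability from the microcanonical state is at least the average
eigenstate distinguishability divided by the number of outcomes. -/
theorem exists_distinguishable_mixture {N NM d : ℕ} (hNM : 0 < NM)
    (M : Fin NM → Matrix (Fin N) (Fin N) ℂ)
    (hM : ∀ i, (M i).PosSemidef) (hMsum : ∑ i, M i = 1)
    (ρ : Fin d → Matrix (Fin N) (Fin N) ℂ)
    (hρ : ∀ n, (ρ n).PosSemidef) (hρ1 : ∀ n, (ρ n).trace = 1)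
    (k : ℕ) (hk : 0 < k) (h3 : 3 * k ≤ d) :
    ∃ S : Finset (Fin d), S.card = k ∧
      (1 / NM) * ((1 / d) * ∑ n, povmDist M (ρ n) ((1 / (d : ℂ)) • ∑ m, ρ m))
        ≤ povmDist M ((1 / (k : ℂ)) • ∑ j ∈ S, ρ j)
            ((1 / (d : ℂ)) • ∑ m, ρ m) := by
  classical
  have hd : 0 < d := lt_of_lt_of_le (by omega) h3
  set Ω : Matrix (Fin N) (Fin N) ℂ := (1 / (d : ℂ)) • ∑ m, ρ m with hΩdef
  have hdC : (d : ℂ) ≠ 0 := Nat.cast_ne_zero.mpr hd.ne'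
  have hkC : (k : ℂ) ≠ 0 := Nat.cast_ne_zero.mpr hk.ne'
  have hΩH : Ωᴴ = Ω := by
    rw [hΩdef, conjTranspose_smul, conjTranspose_sum]
    congr 1
    · simp
    · exact Finset.sum_congr rfl fun m _ => (hρ m).1
  have hHerm : ∀ n, (ρ n - Ω)ᴴ = ρ n - Ω := fun n => by
    rw [conjTranspose_sub, (hρ n).1, hΩH]
  have him : ∀ (i : Fin NM) (n : Fin d), ((M i * (ρ n - Ω)).trace).im = 0 := by
    intro i n
    have h1 : (starRingEnd ℂ) ((M i * (ρ n - Ω)).trace) = (M i * (ρ n - Ω)).trace := by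
      calc (starRingEnd ℂ) ((M i * (ρ n - Ω)).trace)
          = ((M i * (ρ n - Ω))ᴴ).trace := (trace_conjTranspose _).symm
        _ = ((ρ n - Ω) * M i).trace := by rw [conjTranspose_mul, hHerm n, (hM i).1]
        _ = (M i * (ρ n - Ω)).trace := trace_mul_comm _ _
    exact Complex.conj_eq_iff_im.mp h1
  obtain ⟨z, hz⟩ : ∃ z : Fin NM → Fin d → ℝ,
      z = fun i n => ((M i * (ρ n - Ω)).trace).re := ⟨_, rfl⟩
  have habs : ∀ i n, ‖(M i * (ρ n - Ω)).trace‖ = |z i n| := by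
    intro i n
    rw [hz]
    exact abs_of_im_zero _ (him i n)
  have hsum0 : ∑ n, (ρ n - Ω) = 0 := by
    rw [Finset.sum_sub_distrib, Finset.sum_const, Finset.card_univ, Fintype.card_fin,
      sub_eq_zero, ← Nat.cast_smul_eq_nsmul ℂ, hΩdef, smul_smul, mul_one_div, div_self hdC, one_smul]
  have hzsum : ∀ i, ∑ n, z i n = 0 := by
    intro i
    rw [hz]
    have : ∑ n, (M i * (ρ n - Ω)).trace = 0 := by
      rw [← trace_sum, ← Finset.mul_sum, hsum0, mul_zero, trace_zero]
    calc ∑ n, ((M i * (ρ n - Ω)).trace).re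
        = (∑ n, (M i * (ρ n - Ω)).trace).re := by rw [Complex.re_sum]
      _ = 0 := by rw [this]; rfl
  -- choose the best outcome
  obtain ⟨i₀, -, hmax⟩ := Finset.univ.exists_max_image (fun i => ∑ n, |z i n|)
    ⟨⟨0, hNM⟩, Finset.mem_univ _⟩
  obtain ⟨S, hScard, hkey⟩ := key_real d k (z i₀) (hzsum i₀) hk h3
  refine ⟨S, hScard, ?_⟩
  set ω : Matrix (Fin N) (Fin N) ℂ := (1 / (k : ℂ)) • ∑ j ∈ S, ρ j with hωdef
  have hωΩ : ω - Ω = (1 / (k : ℂ)) • ∑ j ∈ S, (ρ j - Ω) := by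
    rw [Finset.sum_sub_distrib, smul_sub, Finset.sum_const, hScard, hωdef]
    congr 1
    rw [← Nat.cast_smul_eq_nsmul ℂ, smul_smul, one_div, inv_mul_cancel₀ hkC, one_smul]
  have htr : (M i₀ * (ω - Ω)).trace = (1 / (k : ℂ)) * ∑ j ∈ S, (M i₀ * (ρ j - Ω)).trace := by
    rw [hωΩ, Matrix.mul_smul, trace_smul, smul_eq_mul, Finset.mul_sum, trace_sum]
  have hre : ((M i₀ * (ω - Ω)).trace).re = (1 / (k : ℝ)) * ∑ j ∈ S, z i₀ j := by
    rw [htr]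
    have hc : (1 / (k : ℂ)) = (((1 / (k : ℝ)) : ℝ) : ℂ) := by push_cast; ring
    rw [hc, Complex.re_ofReal_mul, Complex.re_sum]
    congr 1
    exact Finset.sum_congr rfl fun j _ => by rw [hz]
  obtain ⟨A₀, hA₀⟩ : ∃ A₀ : ℝ, A₀ = ∑ n, |z i₀ n| := ⟨_, rfl⟩
  obtain ⟨B, hB⟩ : ∃ B : ℝ, B = |∑ j ∈ S, z i₀ j| := ⟨_, rfl⟩
  have hA₀nn : 0 ≤ A₀ := hA₀ ▸ Finset.sum_nonneg fun n _ => abs_nonneg _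
  have hBnn : 0 ≤ B := hB ▸ abs_nonneg _
  have hNMpos : (0 : ℝ) < NM := by exact_mod_cast hNM
  have hdpos : (0 : ℝ) < d := by exact_mod_cast hd
  have hkpos : (0 : ℝ) < k := by exact_mod_cast hk
  have hkey' : (k : ℝ) * A₀ ≤ d * B := by rw [hA₀, hB]; exact hkey
  -- step 1
  have hpovm : ∀ n, povmDist M (ρ n) Ω = (1 / 2) * ∑ i, |z i n| := by
    intro n
    simp only [povmDist]
    congr 1
    exact Finset.sum_congr rfl fun i _ => habs i n
  have hmax' : ∑ i, ∑ n, |z i n| ≤ NM * A₀ := by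
    calc ∑ i, ∑ n, |z i n| ≤ ∑ _i : Fin NM, A₀ :=
          Finset.sum_le_sum fun i _ => hA₀ ▸ hmax i (Finset.mem_univ i)
      _ = NM * A₀ := by rw [Finset.sum_const, Finset.card_univ, Fintype.card_fin, nsmul_eq_mul]
  have hstep1 : (1 / (NM : ℝ)) * ((1 / d) * ∑ n, povmDist M (ρ n) Ω)
      ≤ (1 / (2 * (d : ℝ))) * A₀ := by
    have hsumpovm : ∑ n, povmDist M (ρ n) Ω = (1 / 2) * ∑ i, ∑ n, |z i n| := by
      simp_rw [hpovm]
      rw [← Finset.mul_sum, Finset.sum_comm]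
    rw [hsumpovm]
    calc (1 / (NM : ℝ)) * ((1 / d) * ((1 / 2) * ∑ i, ∑ n, |z i n|))
        ≤ (1 / (NM : ℝ)) * ((1 / d) * ((1 / 2) * (NM * A₀))) := by
          apply mul_le_mul_of_nonneg_left _ (by positivity)
          apply mul_le_mul_of_nonneg_left _ (by positivity)
          apply mul_le_mul_of_nonneg_left hmax' (by norm_num)
      _ = ((NM : ℝ)⁻¹ * NM) * ((1 / (2 * (d : ℝ))) * A₀) := by ring
      _ = (1 / (2 * (d : ℝ))) * A₀ := by rw [inv_mul_cancel₀ hNMpos.ne', one_mul]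
  have hstep2 : (1 / (2 * (d : ℝ))) * A₀ ≤ (1 / (2 * (k : ℝ))) * B := by
    rw [one_div_mul_eq_div, one_div_mul_eq_div,
      div_le_div_iff₀ (by positivity) (by positivity)]
    nlinarith [hkey']
  have hstep3 : (1 / (2 * (k : ℝ))) * B ≤ povmDist M ω Ω := by
    have h31 : (1 / (2 * (k : ℝ))) * B = (1 / 2) * |((M i₀ * (ω - Ω)).trace).re| := by
      rw [hre, hB, abs_mul, abs_of_pos (by positivity : (0 : ℝ) < 1 / (k : ℝ))]
      ring
    rw [h31]
    calc (1 / 2 : ℝ) * |((M i₀ * (ω - Ω)).trace).re|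
        ≤ (1 / 2) * ‖(M i₀ * (ω - Ω)).trace‖ :=
          mul_le_mul_of_nonneg_left (Complex.abs_re_le_norm _) (by norm_num)
      _ ≤ povmDist M ω Ω := by
          simp only [povmDist]
          apply mul_le_mul_of_nonneg_left _ (by norm_num)
          exact Finset.single_le_sum
            (f := fun i => ‖(M i * (ω - Ω)).trace‖)
            (fun i _ => norm_nonneg _) (Finset.mem_univ i₀)
  exact hstep1.trans (hstep2.trans hstep3)
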